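/- A nonempty subset A of a group G is 2-stable (there do not exist a1,a2,b1,b2 in G with a_i*b_j ∈ A iff i ≤ j) if and only if A is a left coset of a subgroup of G. -/
import Mathlib


open Pointwise

/-- `A` is `k`-stable in `G` if there are no `a b : Fin k → G` with `a i * b j ∈ A ↔ i ≤ j`. -/
def IsKStable {G : Type*} [Group G] (k : ℕ) (A : Set G) : Prop :=
  ¬ ∃ a b : Fin k → G, ∀ i j : Fin k, a i * b j ∈ A ↔ i ≤ j

theorem two_stable_iff_coset {G : Type*} [Group G] (A : Set G) (hA : A.Nonempty) :
    IsKStable 2 A ↔ ∃ (g : G) (H : Subgroup G), A = g • (H : Set G) := by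
  constructor
  · intro hst
    obtain ⟨a, ha⟩ := hA
    have key : ∀ x ∈ A, ∀ y ∈ A, ∀ z ∈ A, x * y⁻¹ * z ∈ A := by
      intro x hx y hy z hz
      by_contra hc
      refine hst ⟨![1, x * y⁻¹], ![z, y], ?_⟩
      intro i j
      fin_cases i <;> fin_cases j <;>
        simp_all [Matrix.cons_val_zero, Matrix.cons_val_one]
    refine ⟨a, {
      carrier := {h | a * h ∈ A}
      one_mem' := by simpa using ha
      mul_mem' := fun {h₁ h₂} hh₁ hh₂ => by
        have := key _ hh₁ _ ha _ hh₂
        simpa [mul_assoc] using this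
      inv_mem' := fun {h} hh => by
        have := key _ ha _ hh _ ha
        have e : a * (a * h)⁻¹ * a = a * h⁻¹ := by group
        rw [e] at this
        exact this }, ?_⟩
    ext x
    simp only [Set.mem_smul_set_iff_inv_smul_mem, smul_eq_mul, SetLike.mem_coe,
      Subgroup.mem_mk, Set.mem_setOf_eq]
    constructor
    · intro hx
      show a * (a⁻¹ * x) ∈ A
      simpa [mul_assoc] using hx
    · intro hx
      have : a * (a⁻¹ * x) ∈ A := hx
      simpa [mul_assoc] using this
  · rintro ⟨g, H, rfl⟩ ⟨a, b, hab⟩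
    have h00 : a 0 * b 0 ∈ g • (H : Set G) := (hab 0 0).2 le_rfl
    have h01 : a 0 * b 1 ∈ g • (H : Set G) := (hab 0 1).2 (by decide)
    have h11 : a 1 * b 1 ∈ g • (H : Set G) := (hab 1 1).2 le_rfl
    have h10 : a 1 * b 0 ∉ g • (H : Set G) := fun h => by
      have := (hab 1 0).1 h
      exact absurd this (by decide)
    apply h10
    rw [Set.mem_smul_set_iff_inv_smul_mem] at *
    have hh00 : g⁻¹ * (a 0 * b 0) ∈ H := h00
    have hh01 : g⁻¹ * (a 0 * b 1) ∈ H := h01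
    have hh11 : g⁻¹ * (a 1 * b 1) ∈ H := h11
    have : (g⁻¹ * (a 1 * b 1)) * (g⁻¹ * (a 0 * b 1))⁻¹ * (g⁻¹ * (a 0 * b 0)) ∈ H :=
      H.mul_mem (H.mul_mem hh11 (H.inv_mem hh01)) hh00
    have e : (g⁻¹ * (a 1 * b 1)) * (g⁻¹ * (a 0 * b 1))⁻¹ * (g⁻¹ * (a 0 * b 0))
        = g⁻¹ * (a 1 * b 0) := by group
    rwa [e] at this
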